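/- arXiv:2601.22031 — 2 statements merged into one kernel-verified Lean document; each statement's English description precedes it below -/
import Mathlib

section
/- Let (Ω, μ) be a probability space, E a real inner product space, S : Ω → ℝ a measurable function with S(ω) ≥ 0 for all ω, and G : Ω → E strongly measurable with ‖G(ω)‖² ≤ α·S(ω) + ε for almost every ω, where α, ε ≥ 0 and β > 0. Define X(ω) = (β + S(ω))⁻¹ • G(ω) and let m = ∫ X dμ (assuming X is Bochner integrable). Then the variance ∫ ‖X(ω) − m‖² dμ(ω) ≤ ε/β² + α/(4β). -/
open MeasureTheory

/-- Proposition 1 (Gradient Variance Stabilization). On a probability space,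
let `G` be the stochastic gradient with `‖G ω‖² ≤ α·S ω + ε` a.e., where `S ≥ 0`
is the measurable local ambiguity score, `α, ε ≥ 0`, `β > 0`. With the CARD
weighting `X ω = (β + S ω)⁻¹ • G ω` and mean `m = ∫ X dμ`, the variance
`∫ ‖X ω − m‖² dμ` is at most `ε/β² + α/(4β)`. -/
theorem card_gradient_variance_bound
    {Ω : Type*} [MeasurableSpace Ω] (μ : Measure Ω) [IsProbabilityMeasure μ]
    {E : Type*} [NormedAddCommGroup E] [InnerProductSpace ℝ E] [CompleteSpace E]
    (S : Ω → ℝ) (hSmeas : Measurable S) (hS : ∀ ω, 0 ≤ S ω)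
    (G : Ω → E) (hGmeas : StronglyMeasurable G)
    (α ε β : ℝ) (hα : 0 ≤ α) (hε : 0 ≤ ε) (hβ : 0 < β)
    (hG : ∀ᵐ ω ∂μ, ‖G ω‖ ^ 2 ≤ α * S ω + ε)
    (X : Ω → E) (hX : X = fun ω => (β + S ω)⁻¹ • G ω)
    (hXint : Integrable X μ)
    (m : E) (hm : m = ∫ ω, X ω ∂μ) :
    ∫ ω, ‖X ω - m‖ ^ 2 ∂μ ≤ ε / β ^ 2 + α / (4 * β) := by
  set C : ℝ := ε / β ^ 2 + α / (4 * β) with hCdef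
  have hC0 : 0 ≤ C := by positivity
  have hβS : ∀ ω, 0 < β + S ω := fun ω => by linarith [hS ω]
  -- pointwise a.e. bound on ‖X ω‖²
  have hbound : ∀ᵐ ω ∂μ, ‖X ω‖ ^ 2 ≤ C := by
    filter_upwards [hG] with ω hω
    have hs := hS ω
    have hpos := hβS ω
    have h1 : ‖X ω‖ ^ 2 = ((β + S ω)⁻¹) ^ 2 * ‖G ω‖ ^ 2 := by
      rw [hX]; simp [norm_smul, mul_pow, abs_of_pos (inv_pos.mpr hpos)]
    have h2 : ((β + S ω)⁻¹) ^ 2 * ‖G ω‖ ^ 2 ≤ (α * S ω + ε) / (β + S ω) ^ 2 := by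
      rw [div_eq_mul_inv, mul_comm, ← inv_pow]
      exact mul_le_mul_of_nonneg_right hω (by positivity)
    have h3 : (α * S ω + ε) / (β + S ω) ^ 2 ≤ C := by
      rw [hCdef, div_le_iff₀ (by positivity), add_mul]
      have hβ2 : (0:ℝ) < β ^ 2 := by positivity
      have key : ε / β ^ 2 * (β + S ω) ^ 2 ≥ ε := by
        rw [ge_iff_le, div_mul_eq_mul_div, le_div_iff₀ hβ2]
        nlinarith [mul_nonneg hε hs, mul_nonneg (mul_nonneg hε hs) hs, mul_nonneg (mul_nonneg hε hs) hβ.le]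
      have key2 : α / (4 * β) * (β + S ω) ^ 2 ≥ α * S ω := by
        rw [ge_iff_le, div_mul_eq_mul_div, le_div_iff₀ (by positivity)]
        nlinarith [mul_nonneg hα (sq_nonneg (S ω - β))]
      linarith
    calc ‖X ω‖ ^ 2 = ((β + S ω)⁻¹) ^ 2 * ‖G ω‖ ^ 2 := h1
      _ ≤ (α * S ω + ε) / (β + S ω) ^ 2 := h2
      _ ≤ C := h3
  have hXsm := hXint.aestronglyMeasurable
  -- integrability of ‖X‖²
  have hX2int : Integrable (fun ω => ‖X ω‖ ^ 2) μ := by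
    refine Integrable.mono' (integrable_const C) ?_ ?_
    · exact (hXsm.norm.aemeasurable.pow_const 2).aestronglyMeasurable
    · filter_upwards [hbound] with ω hω
      simpa [abs_of_nonneg (sq_nonneg ‖X ω‖)] using hω
  have hinner : Integrable (fun ω => (inner ℝ (X ω) m : ℝ)) μ := hXint.inner_const m
  -- expand ∫ ‖X − m‖²
  have hexpand : ∀ ω, ‖X ω - m‖ ^ 2
      = ‖X ω‖ ^ 2 - 2 * (inner ℝ (X ω) m : ℝ) + ‖m‖ ^ 2 := fun ω => by
    rw [@norm_sub_sq_real]
  have hint_inner : ∫ ω, (inner ℝ (X ω) m : ℝ) ∂μ = ‖m‖ ^ 2 := by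
    have : ∫ ω, (inner ℝ m (X ω) : ℝ) ∂μ = inner ℝ m (∫ ω, X ω ∂μ) :=
      integral_inner hXint m
    rw [show (fun ω => (inner ℝ (X ω) m : ℝ)) = fun ω => (inner ℝ m (X ω) : ℝ) from
      funext fun ω => real_inner_comm _ _, this, ← hm, real_inner_self_eq_norm_sq]
  have hEq : ∫ ω, ‖X ω - m‖ ^ 2 ∂μ = (∫ ω, ‖X ω‖ ^ 2 ∂μ) - ‖m‖ ^ 2 := by
    simp_rw [hexpand]
    have h4 : Integrable (fun ω => ‖X ω‖ ^ 2 - 2 * (inner ℝ (X ω) m : ℝ)) μ :=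
      hX2int.sub (hinner.const_mul 2)
    rw [integral_add h4 (integrable_const _),
      integral_sub hX2int (hinner.const_mul 2), integral_const_mul,
      hint_inner, integral_const]
    simp
    ring
  have hle : ∫ ω, ‖X ω‖ ^ 2 ∂μ ≤ C := by
    calc ∫ ω, ‖X ω‖ ^ 2 ∂μ ≤ ∫ _, C ∂μ :=
          integral_mono_ae hX2int (integrable_const C) hbound
      _ = C := by simp
  have : (0:ℝ) ≤ ‖m‖ ^ 2 := sq_nonneg _
  rw [hEq]; linarith
end

section
/- Let L ≥ 1 and 0 ≤ m ≤ L be natural numbers and f : ℕ → ℝ with f(d) ≥ 0 for all d. Then ∑_{n=1}^{L} ∑_{i=1}^{min(n−1, L−m)} f(n−i) ≥ (1 − m/L)·∑_{n=1}^{L} ∑_{i=1}^{n−1} f(n−i). Moreover, if 1 ≤ m < L and f(d) > 0 for some d with 1 ≤ d ≤ L−1, then the inequality is strict. -/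
open Finset

/-- Reindex an inner sum by distance `d = n - i`. -/
lemma tm_reindex_inner (n k : ℕ) (hn : 1 ≤ n) (hk : k ≤ n - 1) (f : ℕ → ℝ) :
    ∑ i ∈ Icc 1 k, f (n - i) = ∑ d ∈ Icc (n - k) (n - 1), f d := by
  apply Finset.sum_nbij' (fun i => n - i) (fun d => n - d)
  · intro a ha
    simp only [mem_Icc] at ha ⊢
    omega
  · intro b hb
    simp only [mem_Icc] at hb ⊢
    omega
  · intro a ha
    simp only [mem_Icc] at ha
    omega
  · intro b hb
    simp only [mem_Icc] at hb
    omega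
  · intro a ha
    rfl

/-- The tail-masked double sum grouped by distance. -/
lemma tm_tail_count (L m : ℕ) (hL : 1 ≤ L) (hm : m ≤ L) (f : ℕ → ℝ) :
    ∑ n ∈ Icc 1 L, ∑ i ∈ Icc 1 (min (n - 1) (L - m)), f (n - i)
      = ∑ d ∈ Icc 1 (L - 1), ((min (L - d) (L - m) : ℕ) : ℝ) * f d := by
  calc ∑ n ∈ Icc 1 L, ∑ i ∈ Icc 1 (min (n - 1) (L - m)), f (n - i)
      = ∑ n ∈ Icc 1 L, ∑ d ∈ Icc (n - min (n - 1) (L - m)) (n - 1), f d := by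
        refine Finset.sum_congr rfl fun n hn => ?_
        simp only [mem_Icc] at hn
        exact tm_reindex_inner n _ hn.1 (min_le_left _ _) f
    _ = ∑ n ∈ Icc 1 L, ∑ d ∈ Icc 1 (L - 1),
          (if n - min (n - 1) (L - m) ≤ d ∧ d ≤ n - 1 then f d else 0) := by
        refine Finset.sum_congr rfl fun n hn => ?_
        simp only [mem_Icc] at hn
        rw [← Finset.sum_filter]
        congr 1
        ext d
        simp only [mem_filter, mem_Icc]
        omega
    _ = ∑ d ∈ Icc 1 (L - 1), ∑ n ∈ Icc 1 L,
          (if n - min (n - 1) (L - m) ≤ d ∧ d ≤ n - 1 then f d else 0) :=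
        Finset.sum_comm
    _ = ∑ d ∈ Icc 1 (L - 1), ((min (L - d) (L - m) : ℕ) : ℝ) * f d := by
        refine Finset.sum_congr rfl fun d hd => ?_
        simp only [mem_Icc] at hd
        rw [← Finset.sum_filter]
        have hset : (Icc 1 L).filter
            (fun n => n - min (n - 1) (L - m) ≤ d ∧ d ≤ n - 1)
            = Icc (d + 1) (min L (d + (L - m))) := by
          ext n
          simp only [mem_filter, mem_Icc]
          omega
        rw [hset, Finset.sum_const, Nat.card_Icc, nsmul_eq_mul]
        congr 2
        omega

/-- The full (unmasked) double sum grouped by distance. -/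
lemma tm_full_count (L : ℕ) (hL : 1 ≤ L) (f : ℕ → ℝ) :
    ∑ n ∈ Icc 1 L, ∑ i ∈ Icc 1 (n - 1), f (n - i)
      = ∑ d ∈ Icc 1 (L - 1), ((L - d : ℕ) : ℝ) * f d := by
  have h := tm_tail_count L 0 hL (Nat.zero_le L) f
  simp only [Nat.sub_zero] at h
  calc ∑ n ∈ Icc 1 L, ∑ i ∈ Icc 1 (n - 1), f (n - i)
      = ∑ n ∈ Icc 1 L, ∑ i ∈ Icc 1 (min (n - 1) L), f (n - i) := by
        refine Finset.sum_congr rfl fun n hn => ?_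
        simp only [mem_Icc] at hn
        rw [min_eq_left (show n - 1 ≤ L by omega)]
    _ = ∑ d ∈ Icc 1 (L - 1), ((min (L - d) L : ℕ) : ℝ) * f d := h
    _ = ∑ d ∈ Icc 1 (L - 1), ((L - d : ℕ) : ℝ) * f d := by
        refine Finset.sum_congr rfl fun d hd => ?_
        rw [min_eq_left (Nat.sub_le L d)]

/-- Key coefficient inequality in `ℕ`. -/
lemma tm_coeff_le (L m d : ℕ) : (L - m) * (L - d) ≤ min (L - d) (L - m) * L := by
  rcases le_total (L - d) (L - m) with h | h
  · rw [min_eq_left h]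
    calc (L - m) * (L - d) ≤ L * (L - d) := Nat.mul_le_mul_right _ (Nat.sub_le _ _)
      _ = (L - d) * L := Nat.mul_comm _ _
  · rw [min_eq_right h]
    exact Nat.mul_le_mul_left _ (Nat.sub_le _ _)

lemma tm_coeff_lt (L m d : ℕ) (hm : 1 ≤ m) (hmL : m < L) (hd : 1 ≤ d)
    (hdL : d ≤ L - 1) : (L - m) * (L - d) < min (L - d) (L - m) * L := by
  rcases le_total (L - d) (L - m) with h | h
  · rw [min_eq_left h]
    calc (L - m) * (L - d) < L * (L - d) :=
          Nat.mul_lt_mul_of_lt_of_le (by omega) le_rfl (by omega)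
      _ = (L - d) * L := Nat.mul_comm _ _
  · rw [min_eq_right h]
    exact Nat.mul_lt_mul_of_le_of_lt le_rfl (by omega) (by omega)

/-- Proposition 2 (Signal Retention via Causal MI Maximization).
For `L ≥ 1`, `m ≤ L` and nonnegative distance-MI profile `f`, tail masking of
the last `m` positions retains at least as much cumulative causal mutual
information as uniform masking at the same expected noise budget `m/L`:
`∑_{n=1}^{L} ∑_{i=1}^{min(n−1, L−m)} f(n−i) ≥ (1 − m/L)·∑_{n=1}^{L} ∑_{i=1}^{n−1} f(n−i)`,
with strict inequality whenever `1 ≤ m < L` and `f(d) > 0` for some `1 ≤ d ≤ L−1`. -/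
theorem tail_masking_signal_retention (L m : ℕ) (hL : 1 ≤ L) (hm : m ≤ L)
    (f : ℕ → ℝ) (hf : ∀ d, 0 ≤ f d) :
    (∑ n ∈ Icc 1 L, ∑ i ∈ Icc 1 (min (n - 1) (L - m)), f (n - i)
        ≥ (1 - (m : ℝ) / L) * ∑ n ∈ Icc 1 L, ∑ i ∈ Icc 1 (n - 1), f (n - i)) ∧
      (1 ≤ m → m < L → (∃ d ∈ Icc 1 (L - 1), 0 < f d) →
        ∑ n ∈ Icc 1 L, ∑ i ∈ Icc 1 (min (n - 1) (L - m)), f (n - i)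
          > (1 - (m : ℝ) / L) * ∑ n ∈ Icc 1 L, ∑ i ∈ Icc 1 (n - 1), f (n - i)) := by
  have hL0 : (0 : ℝ) < (L : ℝ) := by exact_mod_cast hL
  have hcoef : (1 - (m : ℝ) / L) = ((L - m : ℕ) : ℝ) / L := by
    rw [Nat.cast_sub hm]
    field_simp
  rw [tm_tail_count L m hL hm f, tm_full_count L hL f, hcoef, Finset.mul_sum]
  have hle : ∀ d ∈ Icc 1 (L - 1),
      ((L - m : ℕ) : ℝ) / L * (((L - d : ℕ) : ℝ) * f d)
        ≤ ((min (L - d) (L - m) : ℕ) : ℝ) * f d := by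
    intro d _
    have key : ((L - m : ℕ) : ℝ) / L * ((L - d : ℕ) : ℝ)
        ≤ ((min (L - d) (L - m) : ℕ) : ℝ) := by
      rw [div_mul_eq_mul_div, div_le_iff₀ hL0]
      exact_mod_cast tm_coeff_le L m d
    calc ((L - m : ℕ) : ℝ) / L * (((L - d : ℕ) : ℝ) * f d)
        = (((L - m : ℕ) : ℝ) / L * ((L - d : ℕ) : ℝ)) * f d := by ring
      _ ≤ ((min (L - d) (L - m) : ℕ) : ℝ) * f d :=
          mul_le_mul_of_nonneg_right key (hf d)
  constructor
  · exact Finset.sum_le_sum hle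
  · rintro hm1 hmL ⟨d, hd, hfd⟩
    refine Finset.sum_lt_sum hle ⟨d, hd, ?_⟩
    simp only [mem_Icc] at hd
    have key : ((L - m : ℕ) : ℝ) / L * ((L - d : ℕ) : ℝ)
        < ((min (L - d) (L - m) : ℕ) : ℝ) := by
      rw [div_mul_eq_mul_div, div_lt_iff₀ hL0]
      exact_mod_cast tm_coeff_lt L m d hm1 hmL hd.1 hd.2
    calc ((L - m : ℕ) : ℝ) / L * (((L - d : ℕ) : ℝ) * f d)
        = (((L - m : ℕ) : ℝ) / L * ((L - d : ℕ) : ℝ)) * f d := by ring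
      _ < ((min (L - d) (L - m) : ℕ) : ℝ) * f d :=
          mul_lt_mul_of_pos_right key hfd
end
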